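/- Let ν > 0 be real and let g : ℕ → ℝ be a sequence such that ∑_{k=0}^∞ |g(k)|·Γ(ν+k) < ∞. Then the power series ∑_{k=0}^∞ g(k) x^k converges for every x ≥ 0, the integral ∫_0^∞ x^{ν−1} e^{−x} (∑_{k=0}^∞ g(k) x^k) dx converges, and it equals Γ(ν)·∑_{k=0}^∞ (ν)_k·g(k), where (ν)_k = Γ(ν+k)/Γ(ν) is the Pochhammer symbol (Carr's identity). -/

import Mathlib

open MeasureTheory Set Filter Topology
open scoped ENNReal NNReal

private lemma carr_aux_summable (ν : ℝ) (hν : 0 < ν) (x : ℝ) :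
    Summable (fun k : ℕ => |x| ^ k / Real.Gamma (ν + k)) := by
  rcases eq_or_ne x 0 with rfl | hx
  · apply summable_of_ne_finset_zero (s := {0})
    intro k hk
    simp only [Finset.mem_singleton] at hk
    rw [abs_zero, zero_pow hk, zero_div]
  · have hΓ : ∀ k : ℕ, 0 < Real.Gamma (ν + k) := fun k =>
      Real.Gamma_pos_of_pos (by positivity)
    apply summable_of_ratio_test_tendsto_lt_one (l := 0) one_pos
    · filter_upwards with n
      have h1 := hΓ n
      have h2 : 0 < |x| ^ n := pow_pos (abs_pos.2 hx) n
      positivity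
    · have key : ∀ n : ℕ, ‖|x| ^ (n + 1) / Real.Gamma (ν + ↑(n + 1))‖ /
          ‖|x| ^ n / Real.Gamma (ν + n)‖ = |x| / (ν + n) := by
        intro n
        have h1 := hΓ n
        have h2 : 0 < |x| ^ n := pow_pos (abs_pos.2 hx) n
        have hν2 : (0:ℝ) < ν + n := by positivity
        have hΓ1 : Real.Gamma (ν + ((n:ℝ) + 1)) = (ν + n) * Real.Gamma (ν + n) := by
          rw [show ν + ((n:ℝ) + 1) = (ν + n) + 1 by ring, Real.Gamma_add_one hν2.ne']
        push_cast
        rw [hΓ1, Real.norm_of_nonneg (by positivity), Real.norm_of_nonneg (by positivity),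
          pow_succ]
        field_simp
      refine Tendsto.congr (fun n => (key n).symm) ?_
      exact Tendsto.div_atTop tendsto_const_nhds
        (tendsto_atTop_add_const_left _ ν tendsto_natCast_atTop_atTop)

/-- **Carr's identity**. -/
theorem carr_identity
    (ν : ℝ) (hν : 0 < ν) (g : ℕ → ℝ)
    (hsum : Summable (fun k : ℕ => |g k| * Real.Gamma (ν + k))) :
    (∀ x : ℝ, 0 ≤ x → Summable (fun k : ℕ => g k * x ^ k)) ∧
    IntegrableOn
      (fun x : ℝ => x ^ (ν - 1) * Real.exp (-x) * ∑' k : ℕ, g k * x ^ k) (Ioi 0) ∧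
    ∫ x : ℝ in Ioi 0, x ^ (ν - 1) * Real.exp (-x) * ∑' k : ℕ, g k * x ^ k
      = Real.Gamma ν * ∑' k : ℕ, (Real.Gamma (ν + k) / Real.Gamma ν) * g k := by
  have hΓ : ∀ k : ℕ, 0 < Real.Gamma (ν + k) := fun k =>
    Real.Gamma_pos_of_pos (by positivity)
  -- absolute summability of the power series at every real x
  have hC : ∀ x : ℝ, Summable (fun k : ℕ => |g k| * |x| ^ k) := by
    intro x
    have hs := carr_aux_summable ν hν x
    set S : ℝ := ∑' k : ℕ, |x| ^ k / Real.Gamma (ν + k) with hS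
    refine Summable.of_nonneg_of_le (fun k => by positivity) (fun k => ?_) (hsum.mul_left S)
    have h1 : |x| ^ k / Real.Gamma (ν + k) ≤ S :=
      Summable.le_tsum hs k (fun j _ => by positivity)
    rw [div_le_iff₀ (hΓ k)] at h1
    calc |g k| * |x| ^ k ≤ |g k| * (S * Real.Gamma (ν + k)) :=
          mul_le_mul_of_nonneg_left h1 (abs_nonneg _)
      _ = S * (|g k| * Real.Gamma (ν + k)) := by ring
  have h1 : ∀ x : ℝ, Summable (fun k : ℕ => g k * x ^ k) := fun x =>
    Summable.of_abs (by simpa [abs_mul, abs_pow] using hC x)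
  -- the summand functions
  set F : ℕ → ℝ → ℝ := fun k x => x ^ (ν - 1) * Real.exp (-x) * (g k * x ^ k) with hF
  have hEq : ∀ k : ℕ, EqOn (fun x : ℝ => g k * (Real.exp (-x) * x ^ (ν + k - 1)))
      (F k) (Ioi 0) := by
    intro k x hx
    have hx' : (0:ℝ) < x := hx
    have : x ^ (ν + (k:ℝ) - 1) = x ^ (ν - 1) * (x:ℝ) ^ (k:ℕ) := by
      rw [show ν + (k:ℝ) - 1 = (ν - 1) + k by ring, Real.rpow_add hx', Real.rpow_natCast]
    simp only [F, this]
    ring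
  have hFint : ∀ k : ℕ, IntegrableOn (F k) (Ioi 0) := by
    intro k
    refine IntegrableOn.congr_fun ?_ (hEq k) measurableSet_Ioi
    exact (Real.GammaIntegral_convergent (show (0:ℝ) < ν + k by positivity)).const_mul (g k)
  have hFval : ∀ k : ℕ, ∫ x in Ioi 0, F k x = g k * Real.Gamma (ν + k) := by
    intro k
    rw [← setIntegral_congr_fun measurableSet_Ioi (hEq k), integral_const_mul _ _,
      ← Real.Gamma_eq_integral (show (0:ℝ) < ν + k by positivity)]
  have hnormint : ∀ k : ℕ, ∫ x in Ioi 0, ‖F k x‖ = |g k| * Real.Gamma (ν + k) := by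
    intro k
    have heq : EqOn (fun x : ℝ => |g k| * (Real.exp (-x) * x ^ (ν + k - 1)))
        (fun x => ‖F k x‖) (Ioi 0) := by
      intro x hx
      have hx' : (0:ℝ) < x := hx
      show |g k| * (Real.exp (-x) * x ^ (ν + (k:ℝ) - 1)) = ‖F k x‖
      rw [← hEq k hx]
      simp only [Real.norm_eq_abs, abs_mul]
      rw [abs_of_pos (Real.exp_pos _), abs_of_nonneg (Real.rpow_nonneg hx'.le _)]
    rw [← setIntegral_congr_fun measurableSet_Ioi heq, integral_const_mul _ _,
      ← Real.Gamma_eq_integral (show (0:ℝ) < ν + k by positivity)]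
  have hFsum : Summable (fun k : ℕ => ∫ x in Ioi 0, ‖F k x‖) := by
    simp only [hnormint]; exact hsum
  -- summability of norms pointwise
  have hptw : ∀ x : ℝ, Summable (fun k : ℕ => ‖F k x‖) := by
    intro x
    have : (fun k : ℕ => ‖F k x‖) =
        fun k => |x ^ (ν - 1) * Real.exp (-x)| * (|g k| * |x| ^ k) := by
      funext k
      simp only [F, Real.norm_eq_abs, abs_mul, abs_pow]
    rw [this]
    exact (hC x).mul_left _
  -- measurability of the tsum
  have hmeas : AEStronglyMeasurable (fun x : ℝ => ∑' k : ℕ, F k x)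
      (volume.restrict (Ioi 0)) := by
    have hm2 : Measurable (fun x : ℝ => ∑' k : ℕ, g k * x ^ k) := by
      refine measurable_of_tendsto_metrizable
        (f := fun n x => ∑ k ∈ Finset.range n, g k * x ^ k) (fun n => ?_) ?_
      · exact (continuous_finset_sum _ fun k _ =>
          (continuous_const.mul (continuous_pow k))).measurable
      · rw [tendsto_pi_nhds]
        exact fun x => (h1 x).hasSum.tendsto_sum_nat
    have hm : Measurable (fun x : ℝ => x ^ (ν - 1) * Real.exp (-x) * ∑' k : ℕ, g k * x ^ k) :=
      ((measurable_id.pow_const _).mul (Real.measurable_exp.comp measurable_neg)).mul hm2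
    have : (fun x : ℝ => ∑' k : ℕ, F k x) =
        fun x : ℝ => x ^ (ν - 1) * Real.exp (-x) * ∑' k : ℕ, g k * x ^ k := by
      funext x
      exact tsum_mul_left
    rw [this]
    exact hm.aestronglyMeasurable
  -- integrability of the tsum
  have hint : IntegrableOn (fun x : ℝ => ∑' k : ℕ, F k x) (Ioi 0) := by
    refine ⟨hmeas, ?_⟩
    have step1 : ∫⁻ x in Ioi 0, ‖∑' k : ℕ, F k x‖₊ ≤
        ∫⁻ x in Ioi 0, ∑' k : ℕ, (‖F k x‖₊ : ℝ≥0∞) := by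
      refine lintegral_mono (fun x => ?_)
      have hs : Summable (fun k : ℕ => ‖F k x‖₊) :=
        NNReal.summable_coe.1 (by simpa [coe_nnnorm] using hptw x)
      calc (‖∑' k : ℕ, F k x‖₊ : ℝ≥0∞) ≤ ((∑' k : ℕ, ‖F k x‖₊ : ℝ≥0) : ℝ≥0∞) :=
            ENNReal.coe_le_coe.2 (nnnorm_tsum_le hs)
        _ = ∑' k : ℕ, (‖F k x‖₊ : ℝ≥0∞) := ENNReal.coe_tsum hs
    have step2 : ∫⁻ x in Ioi 0, ∑' k : ℕ, (‖F k x‖₊ : ℝ≥0∞) =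
        ∑' k : ℕ, ∫⁻ x in Ioi 0, (‖F k x‖₊ : ℝ≥0∞) :=
      lintegral_tsum (fun k => (hFint k).1.enorm)
    have step3 : ∀ k : ℕ, ∫⁻ x in Ioi 0, (‖F k x‖₊ : ℝ≥0∞) =
        ENNReal.ofReal (∫ x in Ioi 0, ‖F k x‖) := by
      intro k
      exact (ofReal_integral_norm_eq_lintegral_enorm (hFint k)).symm
    have step4 : ∑' k : ℕ, ENNReal.ofReal (∫ x in Ioi 0, ‖F k x‖) =
        ENNReal.ofReal (∑' k : ℕ, ∫ x in Ioi 0, ‖F k x‖) :=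
      (ENNReal.ofReal_tsum_of_nonneg (fun k => integral_nonneg (fun x => norm_nonneg _))
        hFsum).symm
    show ∫⁻ x in Ioi 0, (‖∑' k : ℕ, F k x‖₊ : ℝ≥0∞) < ⊤
    calc ∫⁻ x in Ioi 0, ‖∑' k : ℕ, F k x‖₊ ≤
          ∑' k : ℕ, ∫⁻ x in Ioi 0, (‖F k x‖₊ : ℝ≥0∞) := step1.trans_eq step2
      _ = ENNReal.ofReal (∑' k : ℕ, ∫ x in Ioi 0, ‖F k x‖) := by
          simp_rw [step3]; exact step4
      _ < ⊤ := ENNReal.ofReal_lt_top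
  -- the exchange of integral and sum
  have hex : ∑' k : ℕ, ∫ x in Ioi 0, F k x = ∫ x in Ioi 0, ∑' k : ℕ, F k x :=
    integral_tsum_of_summable_integral_norm hFint hFsum
  have htsum_eq : (fun x : ℝ => x ^ (ν - 1) * Real.exp (-x) * ∑' k : ℕ, g k * x ^ k) =
      fun x : ℝ => ∑' k : ℕ, F k x := by
    funext x
    exact tsum_mul_left.symm
  refine ⟨fun x _ => h1 x, by rw [htsum_eq]; exact hint, ?_⟩
  rw [htsum_eq, ← hex]
  simp_rw [hFval]
  rw [← tsum_mul_left]
  congr 1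
  funext k
  have hΓν : Real.Gamma ν ≠ 0 := (Real.Gamma_pos_of_pos hν).ne'
  field_simp
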